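/- For every natural number n > 2 and every nonzero real number x, the n-th cyclotomic polynomial satisfies eval x (cyclotomic n ℝ) = x^{φ(n)/2} · eval (x + x⁻¹) Ψ_n, where Ψ_n is the minimal polynomial over ℚ of 2·cos(2π/n), mapped into ℝ[X]. -/

import Mathlib

open Real Polynomial

noncomputable def symPoly (p : ℚ[X]) : ℚ[X] :=
  ∑ k ∈ Finset.range (p.natDegree + 1),
    C (p.coeff k) * ((X ^ 2 + 1) ^ k * X ^ (p.natDegree - k))

lemma symPoly_eval {F : Type*} [Field F] [Algebra ℚ F] (p : ℚ[X]) (x : F) (hx : x ≠ 0) :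
    Polynomial.eval x ((symPoly p).map (algebraMap ℚ F)) =
      x ^ p.natDegree * Polynomial.eval (x + x⁻¹) (p.map (algebraMap ℚ F)) := by
  have hXX : (x + x⁻¹) * x = x ^ 2 + 1 := by field_simp
  have hdeg : (p.map (algebraMap ℚ F)).natDegree = p.natDegree :=
    natDegree_map_eq_of_injective (algebraMap ℚ F).injective p
  have hR : Polynomial.eval (x + x⁻¹) (p.map (algebraMap ℚ F)) =
      ∑ k ∈ Finset.range (p.natDegree + 1),
        algebraMap ℚ F (p.coeff k) * (x + x⁻¹) ^ k := by
    rw [Polynomial.eval_eq_sum_range, hdeg]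
    exact Finset.sum_congr rfl fun k _ => by rw [coeff_map]
  rw [hR]
  unfold symPoly
  rw [Polynomial.map_sum, Polynomial.eval_finset_sum, Finset.mul_sum]
  refine Finset.sum_congr rfl fun k hk => ?_
  have hkle : k ≤ p.natDegree := Nat.lt_succ_iff.mp (Finset.mem_range.mp hk)
  simp only [Polynomial.map_mul, Polynomial.map_pow, Polynomial.map_add,
    Polynomial.map_one, Polynomial.map_X, Polynomial.map_C, coeff_map,
    eval_mul, eval_pow, eval_add, eval_one, eval_X, eval_C]
  rw [← hXX, mul_pow]
  rw [show x ^ p.natDegree = x ^ k * x ^ (p.natDegree - k) by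
    rw [← pow_add, Nat.add_sub_cancel' hkle]]
  ring

lemma symPoly_monic_natDegree (p : ℚ[X]) (hp : p.Monic) :
    (symPoly p).Monic ∧ (symPoly p).natDegree = 2 * p.natDegree := by
  set m := p.natDegree with hm
  have hmonXX : ((X : ℚ[X]) ^ 2 + 1).Monic := by
    simpa using monic_X_pow_add_C (1 : ℚ) (two_ne_zero)
  have hdegXX : ((X : ℚ[X]) ^ 2 + 1).natDegree = 2 := by
    simpa using natDegree_X_pow_add_C (R := ℚ) (r := (1 : ℚ)) (n := 2)
  have hterm : ∀ k, (((X : ℚ[X]) ^ 2 + 1) ^ k * X ^ (m - k)).Monic ∧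
      (((X : ℚ[X]) ^ 2 + 1) ^ k * X ^ (m - k)).natDegree = 2 * k + (m - k) := by
    intro k
    have h1 : (((X : ℚ[X]) ^ 2 + 1) ^ k).Monic := hmonXX.pow k
    refine ⟨h1.mul (monic_X_pow _), ?_⟩
    rw [h1.natDegree_mul (monic_X_pow _), natDegree_pow, hdegXX, natDegree_X_pow, mul_comm k 2]
  have hbound : (symPoly p).natDegree ≤ 2 * m := by
    unfold symPoly
    refine (natDegree_sum_le _ _).trans ?_
    rw [Finset.fold_max_le]
    refine ⟨Nat.zero_le _, fun k hk => ?_⟩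
    have hkle : k ≤ m := Nat.lt_succ_iff.mp (Finset.mem_range.mp hk)
    refine (natDegree_C_mul_le _ _).trans ?_
    rw [(hterm k).2]
    omega
  have hcoeff : (symPoly p).coeff (2 * m) = 1 := by
    unfold symPoly
    rw [finset_sum_coeff, Finset.sum_range_succ]
    have h0 : ∀ k ∈ Finset.range m,
        (C (p.coeff k) * ((X ^ 2 + 1) ^ k * X ^ (m - k))).coeff (2 * m) = 0 := by
      intro k hk
      have hkm : k < m := Finset.mem_range.mp hk
      apply coeff_eq_zero_of_natDegree_lt
      refine lt_of_le_of_lt ((natDegree_C_mul_le _ _).trans_eq (hterm k).2) ?_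
      omega
    rw [Finset.sum_eq_zero h0, zero_add, Nat.sub_self, pow_zero, mul_one,
      hp.coeff_natDegree, C_1, one_mul]
    have hmon := (hterm m).1
    rw [Nat.sub_self, pow_zero, mul_one] at hmon
    have hd := (hterm m).2
    rw [Nat.sub_self, pow_zero, mul_one, add_zero] at hd
    rw [← hd]
    exact hmon.coeff_natDegree
  have hdeg : (symPoly p).natDegree = 2 * m :=
    le_antisymm hbound (le_natDegree_of_ne_zero (by rw [hcoeff]; exact one_ne_zero))
  exact ⟨by rw [Polynomial.Monic, Polynomial.leadingCoeff, hdeg, hcoeff], hdeg⟩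

open Complex IntermediateField

theorem cyclotomic_eval_eq_minpoly_cos_eval (n : ℕ) (hn : 2 < n)
    (x : ℝ) (hx : x ≠ 0) :
    Polynomial.eval x (cyclotomic n ℝ) =
      x ^ (Nat.totient n / 2) *
        Polynomial.eval (x + x⁻¹)
          ((minpoly ℚ (2 * Real.cos (2 * π / n))).map (algebraMap ℚ ℝ)) := by
  have hn0 : (n : ℕ) ≠ 0 := by omega
  have hnpos : 0 < n := by omega
  set ζ : ℂ := Complex.exp (2 * π * Complex.I / n) with hζdef
  have hζ : IsPrimitiveRoot ζ n := Complex.isPrimitiveRoot_exp n hn0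
  set θ : ℝ := 2 * π / n with hθdef
  have hζθ : ζ = Complex.exp ((θ : ℂ) * Complex.I) := by
    rw [hζdef, hθdef]; push_cast; ring_nf
  set α : ℝ := 2 * Real.cos θ with hαdef
  have hαζ : (α : ℂ) = ζ + ζ⁻¹ := by
    rw [hαdef, hζθ, ← Complex.exp_neg]
    push_cast [Complex.ofReal_cos]
    rw [Complex.two_cos]
    ring_nf
  have hζ0 : ζ ≠ 0 := Complex.exp_ne_zero _
  have hζint : IsIntegral ℚ ζ := (hζ.isIntegral hnpos).tower_top
  have hζinv : ζ⁻¹ = ζ ^ (n - 1) := by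
    apply inv_eq_of_mul_eq_one_right
    rw [← pow_succ', Nat.sub_add_cancel (by omega)]
    exact hζ.pow_eq_one
  have hαCint : IsIntegral ℚ ((α : ℝ) : ℂ) := by
    rw [hαζ, hζinv]; exact hζint.add (hζint.pow _)
  have hαint : IsIntegral ℚ α := by
    rw [← isIntegral_algebraMap_iff (algebraMap ℝ ℂ).injective]
    rwa [Complex.coe_algebraMap]
  set Ψ : ℚ[X] := minpoly ℚ α with hΨdef
  have hΨmonic : Ψ.Monic := minpoly.monic hαint
  set m := Ψ.natDegree with hmdef
  have hmpos : 0 < m := minpoly.natDegree_pos hαint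
  -- minpoly over ℚ of the complex version agrees
  have hminC : minpoly ℚ ((α : ℝ) : ℂ) = Ψ := by
    rw [hΨdef, ← Complex.coe_algebraMap,
      minpoly.algebraMap_eq (algebraMap ℝ ℂ).injective]
  -- the field L = ℚ(ζ)
  haveI hLfin : FiniteDimensional ℚ ℚ⟮ζ⟯ := adjoin.finiteDimensional hζint
  have hLrank : Module.finrank ℚ ℚ⟮ζ⟯ = n.totient := by
    rw [adjoin.finrank hζint, ← cyclotomic_eq_minpoly_rat hζ hnpos, natDegree_cyclotomic]
  have hαL : ((α : ℝ) : ℂ) ∈ ℚ⟮ζ⟯ := by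
    rw [hαζ]
    exact add_mem (mem_adjoin_simple_self ℚ ζ) (inv_mem (mem_adjoin_simple_self ℚ ζ))
  -- m divides φ(n)
  have hmdvd : m ∣ n.totient := by
    have h1 : minpoly ℚ (⟨((α : ℝ) : ℂ), hαL⟩ : ℚ⟮ζ⟯) = Ψ := by
      rw [← hminC, ← minpoly.algebraMap_eq (algebraMap ℚ⟮ζ⟯ ℂ).injective
        (⟨((α : ℝ) : ℂ), hαL⟩ : ℚ⟮ζ⟯)]
      rfl
    have h2 := minpoly.degree_dvd (K := ℚ) (IsIntegral.of_finite ℚ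
      (⟨((α : ℝ) : ℂ), hαL⟩ : ℚ⟮ζ⟯))
    rwa [h1, hLrank] at h2
  -- m ≠ φ(n)
  have hζim : ζ.im = Real.sin θ := by rw [hζθ]; exact Complex.exp_ofReal_mul_I_im θ
  have hsin : 0 < Real.sin θ := by
    apply Real.sin_pos_of_pos_of_lt_pi
    · rw [hθdef]; positivity
    · rw [hθdef, div_lt_iff₀ (by exact_mod_cast hnpos)]
      have h3 : (3 : ℝ) ≤ n := by exact_mod_cast hn
      nlinarith [Real.pi_pos]
  have hmne : m ≠ n.totient := by
    intro h
    have hKL : ℚ⟮((α : ℝ) : ℂ)⟯ ≤ ℚ⟮ζ⟯ := adjoin_simple_le_iff.mpr hαL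
    have hKrank : Module.finrank ℚ ℚ⟮((α : ℝ) : ℂ)⟯ = m := by
      rw [adjoin.finrank hαCint, hminC]
    have hEq : ℚ⟮((α : ℝ) : ℂ)⟯ = ℚ⟮ζ⟯ :=
      eq_of_le_of_finrank_eq hKL (by rw [hKrank, hLrank, h])
    have hζK : ζ ∈ ℚ⟮((α : ℝ) : ℂ)⟯ := hEq ▸ mem_adjoin_simple_self ℚ ζ
    -- everything in ℚ(α) is real
    set T : IntermediateField ℚ ℂ :=
      ((Complex.ofRealAm.restrictScalars ℚ).range).toIntermediateField
        (by rintro z ⟨r, rfl⟩; exact ⟨r⁻¹, by simp [Complex.ofRealAm_coe]⟩) with hTdef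
    have hKT : ℚ⟮((α : ℝ) : ℂ)⟯ ≤ T := adjoin_simple_le_iff.mpr ⟨α, rfl⟩
    obtain ⟨r, hr⟩ := hKT hζK
    have : ζ.im = 0 := by rw [← hr]; simp [Complex.ofRealAm_coe]
    rw [hζim] at this
    exact absurd this hsin.ne'
  -- divisibility of cyclotomic by symPoly
  have hcycdvd : cyclotomic n ℚ ∣ symPoly Ψ := by
    rw [cyclotomic_eq_minpoly_rat hζ hnpos]
    apply minpoly.dvd ℚ ζ
    rw [aeval_def, ← Polynomial.eval_map, symPoly_eval Ψ ζ hζ0, ← hαζ]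
    have h0 : Polynomial.eval ((α : ℝ) : ℂ) (Ψ.map (algebraMap ℚ ℂ)) = 0 := by
      rw [Polynomial.eval_map, ← aeval_def, ← Complex.coe_algebraMap,
        aeval_algebraMap_apply, hΨdef, minpoly.aeval, map_zero]
    rw [h0, mul_zero]
  have hsym := symPoly_monic_natDegree Ψ hΨmonic
  have htotle : n.totient ≤ 2 * m := by
    have h1 := Polynomial.natDegree_le_of_dvd hcycdvd hsym.1.ne_zero
    rwa [natDegree_cyclotomic, hsym.2] at h1
  -- conclude φ(n) = 2m
  have htot : n.totient = 2 * m := by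
    obtain ⟨t, ht⟩ := hmdvd
    have ht2 : 2 ≤ t := by
      rcases Nat.lt_or_ge t 2 with h | h
      · interval_cases t
        · rw [mul_zero] at ht
          have := Nat.totient_pos.mpr hnpos
          omega
        · rw [mul_one] at ht; exact absurd ht.symm hmne
      · exact h
    have : 2 * m ≤ m * t := by calc 2 * m = m * 2 := by ring
                                   _ ≤ m * t := Nat.mul_le_mul_left m ht2
    omega
  have hmhalf : m = n.totient / 2 := by omega
  -- final equality of polynomials
  have heq : symPoly Ψ = cyclotomic n ℚ := by
    apply Polynomial.eq_of_monic_of_dvd_of_natDegree_le (cyclotomic.monic n ℚ) hsym.1 hcycdvd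
    rw [natDegree_cyclotomic, hsym.2, htot]
  rw [← map_cyclotomic n (algebraMap ℚ ℝ), ← heq, symPoly_eval Ψ x hx,
    show Ψ.natDegree = n.totient / 2 from hmhalf]
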